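/- Let X ⊆ ℝⁿ, S_v ⊆ ℝ^o, let f_g : ℝⁿ × ℝ^o → ℝⁿ satisfy ‖f_g(x,v) − f_g(x̃,ṽ)‖ ≤ l_f·‖(x,v) − (x̃,ṽ)‖ for all x, x̃ ∈ X and v, ṽ ∈ S_v, and let h : ℝ^o → ℝⁿ be l_h-Lipschitz on S_v. Fix N ∈ ℕ with N ≥ 1 and define V(x,v) := Σ_{i=0}^{N−1} ‖Φ(x,v,i) − h(v)‖. Then for all x ∈ X and all v, ṽ ∈ S_v such that Φ(x,v,t) ∈ X and Φ(x,ṽ,t) ∈ X for all t ∈ ℕ, one has |V(x,v) − V(x,ṽ)| ≤ l_V·‖v − ṽ‖ with l_V := N·l_h + (N−1)·Σ_{k=1}^{N−1} l_f^k. -/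

import Mathlib

open Finset

/-- Euclidean norm of a concatenated pair of vectors. -/
noncomputable def pairNorm {n o : ℕ} (x : EuclideanSpace ℝ (Fin n))
    (v : EuclideanSpace ℝ (Fin o)) : ℝ :=
  Real.sqrt (‖x‖ ^ 2 + ‖v‖ ^ 2)

/-- Iteration of the closed loop `f_g` with frozen reference input `v`:
`Φ(x,v,0) = x`, `Φ(x,v,t+1) = f_g(Φ(x,v,t), v)`. -/
def Phi {n o : ℕ}
    (fg : EuclideanSpace ℝ (Fin n) → EuclideanSpace ℝ (Fin o) → EuclideanSpace ℝ (Fin n))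
    (x : EuclideanSpace ℝ (Fin n)) (v : EuclideanSpace ℝ (Fin o)) :
    ℕ → EuclideanSpace ℝ (Fin n)
  | 0 => x
  | t + 1 => fg (Phi fg x v t) v

/-- The Lipschitz-in-the-reference property (with explicit constant
`l_V = N·l_h + (N−1)·Σ_{k=1}^{N−1} l_f^k`) of the Lyapunov function
`V(x,v) = Σ_{i=0}^{N-1} ‖Φ(x,v,i) − h(v)‖` constructed in the proof of Lemma 1 of the paper. -/
theorem stmt6 {n o : ℕ} (X : Set (EuclideanSpace ℝ (Fin n)))
    (Sv : Set (EuclideanSpace ℝ (Fin o)))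
    (fg : EuclideanSpace ℝ (Fin n) → EuclideanSpace ℝ (Fin o) → EuclideanSpace ℝ (Fin n))
    (lf : ℝ)
    (hfgLip : ∀ x ∈ X, ∀ x' ∈ X, ∀ v ∈ Sv, ∀ v' ∈ Sv,
      ‖fg x v - fg x' v'‖ ≤ lf * pairNorm (x - x') (v - v'))
    (h : EuclideanSpace ℝ (Fin o) → EuclideanSpace ℝ (Fin n)) (lh : ℝ)
    (hhLip : ∀ v ∈ Sv, ∀ v' ∈ Sv, ‖h v - h v'‖ ≤ lh * ‖v - v'‖)
    (N : ℕ) (hN : 1 ≤ N) :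
    ∀ x ∈ X, ∀ v ∈ Sv, ∀ v' ∈ Sv, (∀ t : ℕ, Phi fg x v t ∈ X) →
      (∀ t : ℕ, Phi fg x v' t ∈ X) →
      |(∑ i ∈ Finset.range N, ‖Phi fg x v i - h v‖) -
          ∑ i ∈ Finset.range N, ‖Phi fg x v' i - h v'‖| ≤
        ((N : ℝ) * lh + ((N : ℝ) - 1) * ∑ k ∈ Finset.Icc 1 (N - 1), lf ^ k) * ‖v - v'‖ := by
  intro x hx v hv v' hv' hXv hXv'
  by_cases hvv : v = v'
  · subst hvv; simp
  have hδpos : 0 < ‖v - v'‖ := norm_sub_pos_iff.mpr hvv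
  set δ : ℝ := ‖v - v'‖ with hδ
  have hpair : ∀ (a : EuclideanSpace ℝ (Fin n)) (c : EuclideanSpace ℝ (Fin o)),
      pairNorm a c ≤ ‖a‖ + ‖c‖ := by
    intro a c
    have h1 : ‖a‖ ^ 2 + ‖c‖ ^ 2 ≤ (‖a‖ + ‖c‖) ^ 2 := by
      nlinarith [norm_nonneg a, norm_nonneg c]
    have := Real.sqrt_le_sqrt h1
    simpa [pairNorm, Real.sqrt_sq (by positivity : (0:ℝ) ≤ ‖a‖ + ‖c‖)] using this
  have hlf : 0 ≤ lf := by
    have h1 := hfgLip x hx x hx v hv v' hv'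
    have h2 : pairNorm (x - x) (v - v') = δ := by
      simp [pairNorm, Real.sqrt_sq (norm_nonneg (v - v'))]
      exact hδ.symm
    rw [h2] at h1
    nlinarith [norm_nonneg (fg x v - fg x v')]
  set S : ℕ → ℝ := fun i => ∑ k ∈ Finset.range i, lf ^ (k + 1) with hS
  have hSnonneg : ∀ i, 0 ≤ S i := fun i =>
    Finset.sum_nonneg fun k _ => pow_nonneg hlf _
  have hSmono : Monotone S := fun a b hab =>
    Finset.sum_le_sum_of_subset_of_nonneg (Finset.range_subset_range.mpr hab)
      (fun k _ _ => pow_nonneg hlf _)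
  have hSstep : ∀ i, S (i + 1) = lf * S i + lf := by
    intro i
    simp only [hS, Finset.sum_range_succ', Finset.mul_sum]
    rw [pow_one]
    congr 1
    refine Finset.sum_congr rfl fun k _ => ?_
    ring
  have hd : ∀ i, ‖Phi fg x v i - Phi fg x v' i‖ ≤ S i * δ := by
    intro i
    induction i with
    | zero => simp [Phi, hS]
    | succ i ih =>
      have hb := hfgLip _ (hXv i) _ (hXv' i) v hv v' hv'
      have hp := hpair (Phi fg x v i - Phi fg x v' i) (v - v')
      have hstep : ‖Phi fg x v (i + 1) - Phi fg x v' (i + 1)‖ ≤ lf * (S i * δ + δ) := by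
        calc ‖Phi fg x v (i + 1) - Phi fg x v' (i + 1)‖
            ≤ lf * pairNorm (Phi fg x v i - Phi fg x v' i) (v - v') := hb
          _ ≤ lf * (S i * δ + δ) := by
              apply mul_le_mul_of_nonneg_left _ hlf
              calc pairNorm (Phi fg x v i - Phi fg x v' i) (v - v')
                  ≤ ‖Phi fg x v i - Phi fg x v' i‖ + ‖v - v'‖ := hp
                _ ≤ S i * δ + δ := by rw [← hδ]; linarith
      calc ‖Phi fg x v (i + 1) - Phi fg x v' (i + 1)‖ ≤ lf * (S i * δ + δ) := hstep
        _ = S (i + 1) * δ := by rw [hSstep i]; ring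
  have hterm : ∀ i, |‖Phi fg x v i - h v‖ - ‖Phi fg x v' i - h v'‖| ≤ S i * δ + lh * δ := by
    intro i
    have h1 : |‖Phi fg x v i - h v‖ - ‖Phi fg x v' i - h v'‖|
        ≤ ‖(Phi fg x v i - h v) - (Phi fg x v' i - h v')‖ := abs_norm_sub_norm_le _ _
    have h2 : (Phi fg x v i - h v) - (Phi fg x v' i - h v')
        = (Phi fg x v i - Phi fg x v' i) - (h v - h v') := by abel
    have h3 : ‖(Phi fg x v i - Phi fg x v' i) - (h v - h v')‖
        ≤ ‖Phi fg x v i - Phi fg x v' i‖ + ‖h v - h v'‖ := norm_sub_le _ _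
    have h4 := hhLip v hv v' hv'
    have h5 := hd i
    rw [h2] at h1
    rw [← hδ] at h4
    linarith
  have hsum : |(∑ i ∈ Finset.range N, ‖Phi fg x v i - h v‖) -
      ∑ i ∈ Finset.range N, ‖Phi fg x v' i - h v'‖|
      ≤ ∑ i ∈ Finset.range N, (S i * δ + lh * δ) := by
    rw [← Finset.sum_sub_distrib]
    exact le_trans (Finset.abs_sum_le_sum_abs _ _) (Finset.sum_le_sum fun i _ => hterm i)
  have hScard : ∑ i ∈ Finset.range N, S i ≤ ((N : ℝ) - 1) * S (N - 1) := by
    obtain ⟨M, rfl⟩ : ∃ M, N = M + 1 := ⟨N - 1, (Nat.succ_pred_eq_of_pos hN).symm⟩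
    rw [Finset.sum_range_succ']
    have : ∑ i ∈ Finset.range M, S (i + 1) ≤ ∑ i ∈ Finset.range M, S M := by
      refine Finset.sum_le_sum fun i hi => hSmono ?_
      exact Nat.succ_le_of_lt (Finset.mem_range.mp hi)
    simp only [Nat.add_sub_cancel]
    have h0 : S 0 = 0 := by simp [hS]
    rw [h0]
    rw [Finset.sum_const, nsmul_eq_mul, Finset.card_range] at this
    push_cast
    linarith
  have hIcc : ∑ k ∈ Finset.Icc 1 (N - 1), lf ^ k = S (N - 1) := by
    have hIco : Finset.Icc 1 (N - 1) = Finset.Ico 1 N := by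
      rw [← Finset.Ico_add_one_right_eq_Icc, Nat.sub_add_cancel hN]
    rw [hIco, Finset.sum_Ico_eq_sum_range]
    simp only [hS]
    exact Finset.sum_congr rfl fun k _ => by rw [add_comm]
  calc |(∑ i ∈ Finset.range N, ‖Phi fg x v i - h v‖) -
      ∑ i ∈ Finset.range N, ‖Phi fg x v' i - h v'‖|
      ≤ ∑ i ∈ Finset.range N, (S i * δ + lh * δ) := hsum
    _ = (∑ i ∈ Finset.range N, S i) * δ + (N : ℝ) * lh * δ := by
        rw [Finset.sum_add_distrib, ← Finset.sum_mul, Finset.sum_const, Finset.card_range,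
          nsmul_eq_mul]
        ring
    _ ≤ ((N : ℝ) - 1) * S (N - 1) * δ + (N : ℝ) * lh * δ := by
        have := mul_le_mul_of_nonneg_right hScard (le_of_lt hδpos)
        linarith
    _ = ((N : ℝ) * lh + ((N : ℝ) - 1) * ∑ k ∈ Finset.Icc 1 (N - 1), lf ^ k) * δ := by
        rw [hIcc]; ring
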